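/- arXiv:2412.10828 — 3 statements merged into one kernel-verified Lean document; each statement's English description precedes it below -/
import Mathlib

section
/- Positivity preservation for classical solutions of the Vlasov equation: Let d ≥ 1 be an integer and T > 0. Let u : [0,T] × ℝ^d → ℝ^d be continuous and bounded, and suppose there is K > 0 such that ‖u(t,x) − u(t,y)‖ ≤ K‖x − y‖ for all t ∈ [0,T] and x, y ∈ ℝ^d. Let f : [0,T] × ℝ^d × ℝ^d → ℝ be continuously differentiable and satisfy the Vlasov equation in expanded form at every point of [0,T] × ℝ^d × ℝ^d. If f(0,x,v) ≥ 0 for all (x,v), then f(t,x,v) ≥ 0 for all (t,x,v) ∈ [0,T] × ℝ^d × ℝ^d. -/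
open MeasureTheory Real Set

set_option maxHeartbeats 1000000 in
/-- **Positivity preservation for classical solutions of the Vlasov equation.**
Let `d ≥ 1`, `T > 0`, `u : [0,T] × ℝ^d → ℝ^d` continuous and bounded, and Lipschitz in the
`x`-variable with constant `K > 0` uniformly in `t ∈ [0,T]`.  Let `f` be `C¹` and satisfy the
Vlasov equation in expanded form
`∂_t f + v·∇_x f + (u − v)·∇_v f − d f = 0`
(equivalently, the directional derivative of `f` at `(t,x,v)` in the direction
`(1, v, u(t,x) − v)` equals `d · f(t,x,v)`) at every point of `[0,T] × ℝ^d × ℝ^d`.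
If `f(0,·,·) ≥ 0`, then `f(t,·,·) ≥ 0` for every `t ∈ [0,T]`. -/
theorem positivity_preservation_vlasov
    (d : ℕ) (hd : 1 ≤ d) (T : ℝ) (hT : 0 < T)
    (u : ℝ × EuclideanSpace ℝ (Fin d) → EuclideanSpace ℝ (Fin d))
    (f : ℝ × EuclideanSpace ℝ (Fin d) × EuclideanSpace ℝ (Fin d) → ℝ)
    (hu_cont : ContinuousOn u (Icc 0 T ×ˢ univ))
    (hu_bdd : ∃ C : ℝ, ∀ t ∈ Icc (0:ℝ) T, ∀ x : EuclideanSpace ℝ (Fin d), ‖u (t, x)‖ ≤ C)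
    (K : ℝ) (hK : 0 < K)
    (hu_lip : ∀ t ∈ Icc (0:ℝ) T, ∀ x y : EuclideanSpace ℝ (Fin d),
      ‖u (t, x) - u (t, y)‖ ≤ K * ‖x - y‖)
    (hf_smooth : ContDiff ℝ 1 f)
    (hVlasov : ∀ (t : ℝ), t ∈ Icc 0 T → ∀ (x v : EuclideanSpace ℝ (Fin d)),
      fderiv ℝ f (t, x, v) (1, v, u (t, x) - v) = (d : ℝ) * f (t, x, v))
    (hf0 : ∀ x v : EuclideanSpace ℝ (Fin d), 0 ≤ f (0, x, v)) :
    ∀ t ∈ Icc (0:ℝ) T, ∀ x v : EuclideanSpace ℝ (Fin d), 0 ≤ f (t, x, v) := by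
  classical
  obtain ⟨C₀, hC₀⟩ := hu_bdd
  set C : ℝ := max C₀ 0 with hCdef
  have hC : ∀ t ∈ Icc (0:ℝ) T, ∀ x : EuclideanSpace ℝ (Fin d), ‖u (t, x)‖ ≤ C :=
    fun t ht x => (hC₀ t ht x).trans (le_max_left _ _)
  have hC0 : 0 ≤ C := le_max_right _ _
  -- the characteristic vector field
  set F : ℝ → (EuclideanSpace ℝ (Fin d) × EuclideanSpace ℝ (Fin d)) →
      (EuclideanSpace ℝ (Fin d) × EuclideanSpace ℝ (Fin d)) :=
    fun s p => (p.2, u (s, p.1) - p.2) with hFdef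
  -- key step: propagate positivity over a time interval of length ≤ 1/2
  have key : ∀ s₀ t₁ : ℝ, 0 ≤ s₀ → s₀ ≤ t₁ → t₁ ≤ T → t₁ - s₀ ≤ 1/2 →
      (∀ x v : EuclideanSpace ℝ (Fin d), 0 ≤ f (s₀, x, v)) →
      ∀ x v : EuclideanSpace ℝ (Fin d), 0 ≤ f (t₁, x, v) := by
    intro s₀ t₁ hs₀ hst htT hhalf hpos x₀ v₀
    have hsub : Icc s₀ t₁ ⊆ Icc 0 T := Icc_subset_Icc hs₀ htT
    set R : ℝ := ‖v₀‖ + C + 1 with hRdef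
    set Cb : ℝ := ‖v₀‖ + R + C with hCbdef
    have hR0 : 0 ≤ R := by simp only [hRdef]; positivity
    have hCb0' : 0 ≤ Cb := by simp only [hCbdef, hRdef]; positivity
    have hRR : (R.toNNReal : ℝ) = R := Real.coe_toNNReal _ hR0
    have hCbb : (Cb.toNNReal : ℝ) = Cb := Real.coe_toNNReal _ hCb0'
    have hpl : IsPicardLindelof F (tmin := s₀) (tmax := t₁) ⟨t₁, hst, le_rfl⟩ (x₀, v₀)
        R.toNNReal 0 Cb.toNNReal (K + 1).toNNReal := by
      constructor
      · intro s hs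
        apply LipschitzOnWith.of_dist_le_mul
        intro p _ q _
        have hKK : ((K + 1).toNNReal : ℝ) = K + 1 := Real.coe_toNNReal _ (by linarith)
        rw [hKK]
        have h1 : dist (F s p) (F s q) =
            max (dist p.2 q.2) (dist (u (s, p.1) - p.2) (u (s, q.1) - q.2)) := by
          rw [Prod.dist_eq]
        rw [h1]
        have hle1 : dist p.2 q.2 ≤ dist p q := by
          rw [Prod.dist_eq]; exact le_max_right _ _
        have hle0 : dist p.1 q.1 ≤ dist p q := by
          rw [Prod.dist_eq]; exact le_max_left _ _
        have hu' : ‖u (s, p.1) - u (s, q.1)‖ ≤ K * ‖p.1 - q.1‖ :=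
          hu_lip s (hsub hs) p.1 q.1
        have h2 : dist (u (s, p.1) - p.2) (u (s, q.1) - q.2) ≤
            K * dist p.1 q.1 + dist p.2 q.2 := by
          rw [dist_eq_norm, dist_eq_norm, dist_eq_norm]
          calc ‖u (s, p.1) - p.2 - (u (s, q.1) - q.2)‖
              = ‖(u (s, p.1) - u (s, q.1)) + (q.2 - p.2)‖ := by congr 1; abel
            _ ≤ ‖u (s, p.1) - u (s, q.1)‖ + ‖q.2 - p.2‖ := norm_add_le _ _
            _ ≤ K * ‖p.1 - q.1‖ + ‖p.2 - q.2‖ := by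
                rw [norm_sub_rev (q.2)]; linarith
        have hnn : (0:ℝ) ≤ dist p q := dist_nonneg
        rw [max_le_iff]
        constructor
        · nlinarith
        · nlinarith
      · intro p hp
        apply ContinuousOn.prodMk continuousOn_const
        have : ContinuousOn (fun s : ℝ => u (s, p.1)) (Icc s₀ t₁) := by
          apply hu_cont.comp (Continuous.continuousOn (by fun_prop))
          intro s hs
          exact ⟨hsub hs, mem_univ _⟩
        exact this.sub continuousOn_const
      · intro s hs p hp
        have hp2 : ‖p.2 - v₀‖ ≤ R := by
          have := hp
          rw [Metric.mem_closedBall, Prod.dist_eq, max_le_iff, hRR] at this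
          rw [← dist_eq_norm]; exact this.2
        have hp2' : ‖p.2‖ ≤ ‖v₀‖ + R := by
          calc ‖p.2‖ = ‖(p.2 - v₀) + v₀‖ := by rw [sub_add_cancel]
            _ ≤ ‖p.2 - v₀‖ + ‖v₀‖ := norm_add_le _ _
            _ ≤ ‖v₀‖ + R := by linarith
        have hub : ‖u (s, p.1)‖ ≤ C := hC s (hsub hs) p.1
        have : ‖F s p‖ = max ‖p.2‖ ‖u (s, p.1) - p.2‖ := rfl
        rw [hCbb, this, max_le_iff]
        constructor
        · simp only [hCbdef]; linarith
        · calc ‖u (s, p.1) - p.2‖ ≤ ‖u (s, p.1)‖ + ‖p.2‖ := norm_sub_le _ _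
            _ ≤ Cb := by simp only [hCbdef]; linarith
      · have h1 : max (t₁ - t₁) (t₁ - s₀) = t₁ - s₀ := by
          rw [max_eq_right]; linarith
        show (Cb.toNNReal : ℝ) * max (t₁ - t₁) (t₁ - s₀) ≤ (R.toNNReal : ℝ) - ((0 : NNReal) : ℝ)
        rw [h1, hCbb, hRR, NNReal.coe_zero, sub_zero]
        have hCb0 : 0 ≤ Cb := by simp only [hCbdef, hRdef]; positivity
        have hts : 0 ≤ t₁ - s₀ := by linarith
        calc Cb * (t₁ - s₀) ≤ Cb * (1/2) := by nlinarith
          _ ≤ R := by simp only [hCbdef, hRdef]; nlinarith [norm_nonneg v₀]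
    obtain ⟨γ, hγ₀, hγ⟩ := hpl.exists_eq_forall_mem_Icc_hasDerivWithinAt₀
    replace hγ₀ : γ t₁ = (x₀, v₀) := hγ₀
    -- g s = f(s, γ s) e^{-d s} is constant on [s₀, t₁]
    set g : ℝ → ℝ := fun s => f (s, γ s) * Real.exp (-(d:ℝ) * s) with hgdef
    have hγcont : ContinuousOn γ (Icc s₀ t₁) :=
      fun s hs => (hγ s hs).continuousWithinAt
    have hgcont : ContinuousOn g (Icc s₀ t₁) := by
      apply ContinuousOn.mul
      · exact (hf_smooth.continuous.comp_continuousOn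
          (continuousOn_id.prodMk hγcont))
      · exact (Real.continuous_exp.comp (continuous_const.mul continuous_id)).continuousOn
    have hgderiv : ∀ s ∈ Icc s₀ t₁, HasDerivWithinAt g 0 (Icc s₀ t₁) s := by
      intro s hs
      have hcurve : HasDerivWithinAt (fun s : ℝ => (s, γ s))
          ((1 : ℝ), F s (γ s)) (Icc s₀ t₁) s :=
        (hasDerivWithinAt_id s _).prodMk (hγ s hs)
      have hfd : HasFDerivAt f (fderiv ℝ f (s, γ s)) (s, γ s) :=
        (hf_smooth.differentiable one_ne_zero (s, γ s)).hasFDerivAt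
      have hcomp : HasDerivWithinAt (fun s : ℝ => f (s, γ s))
          (fderiv ℝ f (s, γ s) ((1 : ℝ), F s (γ s))) (Icc s₀ t₁) s :=
        hfd.comp_hasDerivWithinAt s hcurve
      have heq : fderiv ℝ f (s, γ s) ((1 : ℝ), F s (γ s)) = (d : ℝ) * f (s, γ s) := by
        have := hVlasov s (hsub hs) (γ s).1 (γ s).2
        simpa using this
      rw [heq] at hcomp
      have hexp : HasDerivAt (fun s : ℝ => Real.exp (-(d:ℝ) * s))
          (Real.exp (-(d:ℝ) * s) * (-(d:ℝ))) s := by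
        have h1 : HasDerivAt (fun s : ℝ => -(d:ℝ) * s) (-(d:ℝ)) s := by
          simpa using (hasDerivAt_id s).const_mul (-(d:ℝ))
        exact (Real.hasDerivAt_exp _).comp s h1
      have := hcomp.fun_mul (hexp.hasDerivWithinAt (s := Icc s₀ t₁))
      have h0 : (d:ℝ) * f (s, γ s) * Real.exp (-(d:ℝ) * s)
          + f (s, γ s) * (Real.exp (-(d:ℝ) * s) * -(d:ℝ)) = 0 := by ring
      rw [h0] at this
      exact this
    have hconst := constant_of_has_deriv_right_zero hgcont
      (fun s hs => (hgderiv s (Ico_subset_Icc_self hs)).mono_of_mem_nhdsWithin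
        (Icc_mem_nhdsGE_of_mem hs))
    have hg1 : g t₁ = g s₀ := hconst t₁ ⟨hst, le_rfl⟩
    have hgs₀ : 0 ≤ g s₀ := by
      have : 0 ≤ f (s₀, γ s₀) := by
        have := hpos (γ s₀).1 (γ s₀).2
        simpa using this
      exact mul_nonneg this (Real.exp_pos _).le
    have hgt₁ : 0 ≤ g t₁ := hg1 ▸ hgs₀
    have : g t₁ = f (t₁, x₀, v₀) * Real.exp (-(d:ℝ) * t₁) := by
      simp only [hgdef, hγ₀]
    rw [this] at hgt₁
    nlinarith [Real.exp_pos (-(d:ℝ) * t₁), hgt₁]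
  -- induction over time steps of length 1/2
  have main : ∀ n : ℕ, ∀ t ∈ Icc (0:ℝ) T, t ≤ n * (1/2 : ℝ) →
      ∀ x v : EuclideanSpace ℝ (Fin d), 0 ≤ f (t, x, v) := by
    intro n
    induction n with
    | zero =>
      intro t ht hle x v
      have : t = 0 := le_antisymm (by simpa using hle) ht.1
      rw [this]; exact hf0 x v
    | succ n ih =>
      intro t ht hle x v
      set s₀ : ℝ := max 0 (t - 1/2) with hs₀def
      have hs₀0 : 0 ≤ s₀ := le_max_left _ _
      have hs₀t : s₀ ≤ t := max_le ht.1 (by linarith)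
      have hs₀T : s₀ ≤ T := hs₀t.trans ht.2
      have hhalf : t - s₀ ≤ 1/2 := by
        have : t - 1/2 ≤ s₀ := le_max_right _ _
        linarith
      have hs₀n : s₀ ≤ n * (1/2 : ℝ) := by
        apply max_le
        · positivity
        · push_cast at hle ⊢; linarith
      exact key s₀ t hs₀0 hs₀t ht.2 hhalf
        (fun x v => ih s₀ ⟨hs₀0, hs₀T⟩ hs₀n x v) x v
  intro t ht x v
  refine main ⌈2 * T⌉₊ t ht ?_ x v
  have h2T : 2 * T ≤ (⌈2 * T⌉₊ : ℝ) := Nat.le_ceil _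
  calc t ≤ T := ht.2
    _ ≤ (⌈2 * T⌉₊ : ℝ) * (1/2) := by linarith
end

section
/- Velocity-moment interpolation inequality for the local momentum: Let d ≥ 1 be an integer and let p > 1 be a real number. There exists a constant C depending only on d and p such that for every A > 0 and every measurable function g : ℝ^d → ℝ with 0 ≤ g(v) ≤ A for all v, one has ∫_{ℝ^d} ‖v‖ g(v) dv ≤ C · A^{(p−1)/(p+d)} · (∫_{ℝ^d} ‖v‖^p g(v) dv)^{(d+1)/(p+d)}. -/
open MeasureTheory Real Set ENNReal

/-- **Velocity-moment interpolation inequality for the local momentum.**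
For every dimension `d ≥ 1` and real `p > 1` there is a constant `C = C(d,p)` such that
for every `A > 0` and every measurable `g : ℝ^d → ℝ` with `0 ≤ g ≤ A`,
`∫ ‖v‖ g(v) dv ≤ C · A^{(p−1)/(p+d)} · (∫ ‖v‖^p g(v) dv)^{(d+1)/(p+d)}`
(Lebesgue upper integrals, possibly infinite). -/
theorem momentum_moment_interpolation
    (d : ℕ) (hd : 1 ≤ d) (p : ℝ) (hp : 1 < p) :
    ∃ C : ℝ, 0 < C ∧
      ∀ (A : ℝ), 0 < A → ∀ g : EuclideanSpace ℝ (Fin d) → ℝ, Measurable g →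
        (∀ v, 0 ≤ g v) → (∀ v, g v ≤ A) →
        (∫⁻ v : EuclideanSpace ℝ (Fin d), ENNReal.ofReal (‖v‖ * g v))
          ≤ ENNReal.ofReal C * ENNReal.ofReal A ^ ((p - 1) / (p + d))
            * (∫⁻ v : EuclideanSpace ℝ (Fin d),
                ENNReal.ofReal (‖v‖ ^ p * g v)) ^ (((d : ℝ) + 1) / (p + d)) := by
  classical
  set c : ℝ := (volume (Metric.ball (0 : EuclideanSpace ℝ (Fin d)) 1)).toReal with hc
  have hballlt : volume (Metric.ball (0 : EuclideanSpace ℝ (Fin d)) 1) < ⊤ :=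
    measure_ball_lt_top
  have hcpos : 0 < c :=
    ENNReal.toReal_pos (Metric.measure_ball_pos volume 0 one_pos).ne' hballlt.ne
  refine ⟨c + 1, by linarith, ?_⟩
  intro A hA g hg hg0 hgA
  have hdpos : (0:ℝ) < d := by exact_mod_cast hd
  have hpd : (0:ℝ) < p + d := by linarith
  set θ : ℝ := (p - 1) / (p + d) with hθ
  set σ : ℝ := ((d:ℝ) + 1) / (p + d) with hσ
  have hσpos : 0 < σ := by positivity
  set M := ∫⁻ v : EuclideanSpace ℝ (Fin d), ENNReal.ofReal (‖v‖ ^ p * g v) with hM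
  have hmeas1 : Measurable fun v : EuclideanSpace ℝ (Fin d) =>
      ENNReal.ofReal (‖v‖ * g v) := (measurable_norm.mul hg).ennreal_ofReal
  have hmeasp : Measurable fun v : EuclideanSpace ℝ (Fin d) =>
      ENNReal.ofReal (‖v‖ ^ p * g v) :=
    (((continuous_norm.rpow_const fun v => Or.inr (by linarith)).measurable).mul
      hg).ennreal_ofReal
  rcases eq_or_ne M 0 with hM0 | hM0
  · -- degenerate case: the p-th moment vanishes, hence g vanishes a.e. off 0
    have hae := (lintegral_eq_zero_iff hmeasp).mp hM0
    have hzero : (∫⁻ v : EuclideanSpace ℝ (Fin d), ENNReal.ofReal (‖v‖ * g v)) = 0 := by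
      rw [lintegral_eq_zero_iff hmeas1]
      filter_upwards [hae] with v hv
      simp only [Pi.zero_apply] at hv ⊢
      rcases eq_or_ne v 0 with rfl | hv0
      · simp
      · have hnorm : 0 < ‖v‖ := norm_pos_iff.mpr hv0
        have hle : ‖v‖ ^ p * g v ≤ 0 := ENNReal.ofReal_eq_zero.mp hv
        have hgv : g v = 0 := by
          nlinarith [Real.rpow_pos_of_pos hnorm p, hg0 v]
        simp [hgv]
    rw [hzero]; exact zero_le
  rcases eq_or_ne M ⊤ with hMtop | hMtop
  · -- infinite moment: RHS is infinite
    have : ENNReal.ofReal (c + 1) * ENNReal.ofReal A ^ θ * M ^ σ = ⊤ := by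
      rw [hMtop, ENNReal.top_rpow_of_pos hσpos, ENNReal.mul_top]
      intro h
      rcases mul_eq_zero.mp h with h1 | h1
      · exact absurd h1 (by simp; linarith)
      · exact absurd h1 (ENNReal.rpow_pos (by simp [hA]) (by simp)).ne'
    rw [this]; exact le_top
  -- main case
  set m : ℝ := M.toReal with hm
  have hmpos : 0 < m := ENNReal.toReal_pos hM0 hMtop
  set R : ℝ := (m / A) ^ (1 / (p + d)) with hR
  have hRpos : 0 < R := Real.rpow_pos_of_pos (div_pos hmpos hA) _
  -- key real identities
  have keyA : R ^ ((d:ℝ) + 1) * A = A ^ θ * m ^ σ := by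
    have h1 : R ^ ((d:ℝ) + 1) = (m / A) ^ σ := by
      rw [hR, ← Real.rpow_mul (div_pos hmpos hA).le]
      congr 1
      rw [hσ]
      field_simp
    rw [h1, Real.div_rpow hmpos.le hA.le]
    have h2 : A ^ θ = A / A ^ σ := by
      rw [hθ, hσ]
      have : (p - 1) / (p + d) = 1 - ((d:ℝ) + 1) / (p + d) := by
        field_simp; ring
      rw [this, Real.rpow_sub hA, Real.rpow_one]
    rw [h2]
    field_simp
  have keyB : R ^ (1 - p) * m = A ^ θ * m ^ σ := by
    have h1 : R ^ (1 - p) = m ^ ((1 - p) / (p + d)) * A ^ θ := by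
      rw [hR, ← Real.rpow_mul (div_pos hmpos hA).le,
        Real.div_rpow hmpos.le hA.le]
      have h2 : 1 / (p + d) * (1 - p) = (1 - p) / (p + d) := by ring
      rw [h2]
      have h3 : A ^ ((1 - p) / (p + d)) = (A ^ θ)⁻¹ := by
        rw [hθ, show (1 - p) / (p + d) = -((p - 1) / (p + d)) by ring,
          Real.rpow_neg hA.le]
      rw [h3, div_eq_mul_inv, inv_inv]
    rw [h1]
    have h4 : m ^ ((1 - p) / (p + d)) * A ^ θ * m = A ^ θ * m ^ σ := by
      have : m ^ ((1 - p) / (p + d)) * m = m ^ σ := by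
        nth_rewrite 2 [← Real.rpow_one m]
        rw [← Real.rpow_add hmpos, hσ]
        congr 1
        field_simp
        ring
      rw [mul_comm (m ^ ((1 - p) / (p + d))) (A ^ θ), mul_assoc, this]
    exact h4
  -- split the integral
  have hsplit := lintegral_add_compl (μ := volume)
    (fun v : EuclideanSpace ℝ (Fin d) => ENNReal.ofReal (‖v‖ * g v))
    (measurableSet_closedBall (x := (0 : EuclideanSpace ℝ (Fin d))) (ε := R))
  -- bound on the ball
  have h1 : (∫⁻ v in Metric.closedBall (0 : EuclideanSpace ℝ (Fin d)) R,
      ENNReal.ofReal (‖v‖ * g v)) ≤ ENNReal.ofReal (c * (A ^ θ * m ^ σ)) := by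
    have step1 : (∫⁻ v in Metric.closedBall (0 : EuclideanSpace ℝ (Fin d)) R,
        ENNReal.ofReal (‖v‖ * g v)) ≤
        ∫⁻ _ in Metric.closedBall (0 : EuclideanSpace ℝ (Fin d)) R,
          ENNReal.ofReal (R * A) := by
      refine setLIntegral_mono' measurableSet_closedBall fun v hv => ?_
      refine ENNReal.ofReal_le_ofReal ?_
      have hvR : ‖v‖ ≤ R := mem_closedBall_zero_iff.mp hv
      exact mul_le_mul hvR (hgA v) (hg0 v) hRpos.le
    refine step1.trans ?_
    rw [setLIntegral_const, Measure.addHaar_closedBall _ _ hRpos.le,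
      finrank_euclideanSpace_fin]
    have hvol : volume (Metric.ball (0 : EuclideanSpace ℝ (Fin d)) 1)
        = ENNReal.ofReal c := (ENNReal.ofReal_toReal hballlt.ne).symm
    rw [hvol, ← ENNReal.ofReal_mul (by positivity), ← ENNReal.ofReal_mul (by positivity)]
    refine ENNReal.ofReal_le_ofReal (le_of_eq ?_)
    have hRd : R ^ ((d:ℝ) + 1) = R ^ (d : ℕ) * R := by
      rw [Real.rpow_add hRpos, Real.rpow_one, Real.rpow_natCast]
    rw [← keyA, hRd]
    ring
  -- bound off the ball
  have h2 : (∫⁻ v in (Metric.closedBall (0 : EuclideanSpace ℝ (Fin d)) R)ᶜ,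
      ENNReal.ofReal (‖v‖ * g v)) ≤ ENNReal.ofReal (A ^ θ * m ^ σ) := by
    have step1 : (∫⁻ v in (Metric.closedBall (0 : EuclideanSpace ℝ (Fin d)) R)ᶜ,
        ENNReal.ofReal (‖v‖ * g v)) ≤
        ∫⁻ v in (Metric.closedBall (0 : EuclideanSpace ℝ (Fin d)) R)ᶜ,
          ENNReal.ofReal (R ^ (1 - p)) * ENNReal.ofReal (‖v‖ ^ p * g v) := by
      refine setLIntegral_mono' measurableSet_closedBall.compl fun v hv => ?_
      have hvR : R < ‖v‖ := by
        simpa [Metric.mem_closedBall, not_le, dist_zero_right] using hv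
      rw [← ENNReal.ofReal_mul (Real.rpow_nonneg hRpos.le _)]
      refine ENNReal.ofReal_le_ofReal ?_
      have hnv : 0 < ‖v‖ := hRpos.trans hvR
      have hle : ‖v‖ ^ (1 - p) ≤ R ^ (1 - p) :=
        Real.rpow_le_rpow_of_nonpos hRpos hvR.le (by linarith)
      have hid : ‖v‖ * g v = ‖v‖ ^ (1 - p) * (‖v‖ ^ p * g v) := by
        rw [← mul_assoc, ← Real.rpow_add hnv, sub_add_cancel, Real.rpow_one]
      calc ‖v‖ * g v = ‖v‖ ^ (1 - p) * (‖v‖ ^ p * g v) := hid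
        _ ≤ R ^ (1 - p) * (‖v‖ ^ p * g v) := by
            refine mul_le_mul_of_nonneg_right hle ?_
            exact mul_nonneg (Real.rpow_nonneg hnv.le _) (hg0 v)
    refine step1.trans ?_
    rw [lintegral_const_mul _ hmeasp]
    calc ENNReal.ofReal (R ^ (1 - p)) * ∫⁻ v in
          (Metric.closedBall (0 : EuclideanSpace ℝ (Fin d)) R)ᶜ,
          ENNReal.ofReal (‖v‖ ^ p * g v)
        ≤ ENNReal.ofReal (R ^ (1 - p)) * M :=
          mul_le_mul_right (setLIntegral_le_lintegral _ _) _
      _ = ENNReal.ofReal (R ^ (1 - p)) * ENNReal.ofReal m := by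
          rw [hm, ENNReal.ofReal_toReal hMtop]
      _ = ENNReal.ofReal (R ^ (1 - p) * m) :=
          (ENNReal.ofReal_mul (Real.rpow_nonneg hRpos.le _)).symm
      _ = ENNReal.ofReal (A ^ θ * m ^ σ) := by rw [keyB]
  -- combine
  have hRHS : ENNReal.ofReal (c + 1) * ENNReal.ofReal A ^ θ * M ^ σ
      = ENNReal.ofReal ((c + 1) * (A ^ θ * m ^ σ)) := by
    have hMA : M = ENNReal.ofReal m := by rw [hm, ENNReal.ofReal_toReal hMtop]
    rw [hMA, ENNReal.ofReal_rpow_of_pos hmpos, ENNReal.ofReal_rpow_of_pos hA,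
      ← ENNReal.ofReal_mul (by positivity : (0:ℝ) ≤ c + 1),
      ← ENNReal.ofReal_mul (by positivity)]
    congr 1
    ring
  rw [hRHS, ← hsplit]
  calc (∫⁻ v in Metric.closedBall (0 : EuclideanSpace ℝ (Fin d)) R,
        ENNReal.ofReal (‖v‖ * g v)) +
      ∫⁻ v in (Metric.closedBall (0 : EuclideanSpace ℝ (Fin d)) R)ᶜ,
        ENNReal.ofReal (‖v‖ * g v)
      ≤ ENNReal.ofReal (c * (A ^ θ * m ^ σ)) + ENNReal.ofReal (A ^ θ * m ^ σ) :=
        add_le_add h1 h2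
    _ = ENNReal.ofReal ((c + 1) * (A ^ θ * m ^ σ)) := by
        rw [← ENNReal.ofReal_add (by positivity) (by positivity)]
        ring_nf
end

section
/- Nonlinear Grönwall inequality used in the error analysis: Let T > 0, C ≥ 0, b ≥ 0 and a > 0. Let Ψ : [0,T] → ℝ be differentiable with Ψ(0) = a, Ψ(t) > 0 for all t ∈ [0,T], and Ψ'(t) ≤ C(Ψ(t) + b·Ψ(t)²) for all t ∈ [0,T]. Then for every t ∈ [0,T], Ψ(t)·(1 − a·b·(e^{Ct} − 1)) ≤ a·e^{Ct}. In particular, if a·b·(e^{CT} − 1) < 1 then Ψ(t) ≤ a·e^{CT}/(1 − a·b·(e^{CT} − 1)) for all t ∈ [0,T]. -/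
open Real Set

/-- **Nonlinear Grönwall inequality used in the error analysis.**
Let `T > 0`, `C ≥ 0`, `b ≥ 0`, `a > 0`, and let `Ψ : [0,T] → ℝ` be differentiable with
`Ψ(0) = a`, `Ψ > 0` on `[0,T]`, and `Ψ' ≤ C(Ψ + bΨ²)` on `[0,T]`.  Then for every
`t ∈ [0,T]`, `Ψ(t)(1 − a b (e^{Ct} − 1)) ≤ a e^{Ct}`; in particular, if
`a b (e^{CT} − 1) < 1` then `Ψ(t) ≤ a e^{CT} / (1 − a b (e^{CT} − 1))` on `[0,T]`. -/
theorem nonlinear_gronwall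
    (T C b a : ℝ) (hT : 0 < T) (hC : 0 ≤ C) (hb : 0 ≤ b) (ha : 0 < a)
    (Ψ : ℝ → ℝ)
    (hΨ0 : Ψ 0 = a)
    (hΨpos : ∀ t ∈ Icc (0:ℝ) T, 0 < Ψ t)
    (hΨdiff : ∀ t ∈ Icc (0:ℝ) T, DifferentiableAt ℝ Ψ t)
    (hΨderiv : ∀ t ∈ Icc (0:ℝ) T, deriv Ψ t ≤ C * (Ψ t + b * Ψ t ^ 2)) :
    (∀ t ∈ Icc (0:ℝ) T,
        Ψ t * (1 - a * b * (Real.exp (C * t) - 1)) ≤ a * Real.exp (C * t)) ∧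
    (a * b * (Real.exp (C * T) - 1) < 1 →
      ∀ t ∈ Icc (0:ℝ) T,
        Ψ t ≤ a * Real.exp (C * T) / (1 - a * b * (Real.exp (C * T) - 1))) := by
  set g : ℝ → ℝ := fun t => Real.exp (C * t) / Ψ t + b * Real.exp (C * t) with hg
  -- derivative of g at points of Icc
  have hgder : ∀ t ∈ Icc (0:ℝ) T, HasDerivAt g
      ((C * Real.exp (C * t) * Ψ t - Real.exp (C * t) * deriv Ψ t) / Ψ t ^ 2
        + b * (C * Real.exp (C * t))) t := by
    intro t ht
    have hP := hΨpos t ht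
    have hE : HasDerivAt (fun t => Real.exp (C * t)) (C * Real.exp (C * t)) t := by
      have := (Real.hasDerivAt_exp (C * t)).comp t ((hasDerivAt_id t).const_mul C)
      exact this.congr_deriv (by simp [mul_comm])
    have hΨ' : HasDerivAt Ψ (deriv Ψ t) t := (hΨdiff t ht).hasDerivAt
    have hdiv := hE.div hΨ' (ne_of_gt hP)
    have := hdiv.add (hE.const_mul b)
    exact this
  have hgc : ContinuousOn g (Icc 0 T) := fun t ht =>
    ((hgder t ht).continuousAt).continuousWithinAt
  have hgd : DifferentiableOn ℝ g (interior (Icc (0:ℝ) T)) := by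
    intro t ht
    exact ((hgder t (interior_subset ht)).differentiableAt).differentiableWithinAt
  have hgmono : MonotoneOn g (Icc 0 T) := by
    apply monotoneOn_of_deriv_nonneg (convex_Icc 0 T) hgc hgd
    intro t ht
    have ht' : t ∈ Icc (0:ℝ) T := interior_subset ht
    rw [(hgder t ht').deriv]
    have hP := hΨpos t ht'
    have hE := Real.exp_pos (C * t)
    have hd := hΨderiv t ht'
    have hP2 : (0:ℝ) < Ψ t ^ 2 := pow_pos hP 2
    have hnum : 0 ≤ C * Real.exp (C * t) * Ψ t - Real.exp (C * t) * deriv Ψ t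
        + b * (C * Real.exp (C * t)) * Ψ t ^ 2 := by nlinarith [mul_le_mul_of_nonneg_left hd hE.le]
    rw [div_add' _ _ _ (ne_of_gt hP2)]
    exact div_nonneg hnum hP2.le
  have main : ∀ t ∈ Icc (0:ℝ) T,
      Ψ t * (1 - a * b * (Real.exp (C * t) - 1)) ≤ a * Real.exp (C * t) := by
    intro t ht
    have h0 : (0:ℝ) ∈ Icc (0:ℝ) T := ⟨le_refl 0, hT.le⟩
    have key := hgmono h0 ht ht.1
    have hP := hΨpos t ht
    simp only [hg, mul_zero, Real.exp_zero, hΨ0, mul_one] at key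
    -- key : 1 / a + b ≤ exp (C*t) / Ψ t + b * exp (C*t)
    rw [div_add' _ _ _ (ne_of_gt ha), div_add' _ _ _ (ne_of_gt hP),
      div_le_div_iff₀ ha hP] at key
    nlinarith [key]
  refine ⟨main, fun hδ t ht => ?_⟩
  have hEt : Real.exp (C * t) ≤ Real.exp (C * T) :=
    Real.exp_le_exp.2 (mul_le_mul_of_nonneg_left ht.2 hC)
  have hP := hΨpos t ht
  have h1 := main t ht
  have hδ' : a * b * (Real.exp (C * t) - 1) ≤ a * b * (Real.exp (C * T) - 1) := by
    have : 0 ≤ a * b := mul_nonneg ha.le hb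
    nlinarith
  rw [le_div_iff₀ (by linarith)]
  nlinarith [mul_le_mul_of_nonneg_left hδ' hP.le]
end
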